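/- arXiv:2411.08589 — 3 statements merged into one kernel-verified Lean document; each statement's English description precedes it below -/
import Mathlib

section
/- Let a, b, c, d be probability measures on ℝ with finite second moment, and let x, y ≥ 0 be real numbers. If Δ(a)·Δ(b) ≥ x and Δ(c)·Δ(d) ≥ y, then Δ(a ⋆ c)·Δ(b ⋆ d) ≥ x + y. (Proposition 1 of the paper, used to derive all frame-relative uncertainty relations.) -/
open MeasureTheory

/-- Mean of a measure on ℝ. -/
noncomputable def mMean (μ : Measure ℝ) : ℝ := ∫ x, x ∂μ

/-- Variance Δ² of a measure on ℝ. -/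
noncomputable def mVar (μ : Measure ℝ) : ℝ := ∫ x, (x - mMean μ) ^ 2 ∂μ

/-- Standard deviation Δ of a measure on ℝ. -/
noncomputable def mStd (μ : Measure ℝ) : ℝ := Real.sqrt (mVar μ)

/-- μ has finite second moment. -/
def FinSecondMoment (μ : Measure ℝ) : Prop := Integrable (fun x => x ^ 2) μ

/-- Convolution of two measures on ℝ: pushforward of the product under addition. -/
noncomputable def mConv (a b : Measure ℝ) : Measure ℝ :=
  Measure.map (fun p : ℝ × ℝ => p.1 + p.2) (a.prod b)

lemma fin_int_id (a : Measure ℝ) [IsProbabilityMeasure a] (ha : FinSecondMoment a) :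
    Integrable (fun x : ℝ => x) a := by
  have h2 : MemLp (fun x : ℝ => x) 2 a :=
    (memLp_two_iff_integrable_sq aestronglyMeasurable_id).mpr ha
  exact h2.integrable (by norm_num)

lemma fin_int_sub_sq (a : Measure ℝ) [IsProbabilityMeasure a] (ha : FinSecondMoment a) (m : ℝ) :
    Integrable (fun x : ℝ => (x - m) ^ 2) a := by
  have h2 : MemLp (fun x : ℝ => x) 2 a :=
    (memLp_two_iff_integrable_sq aestronglyMeasurable_id).mpr ha
  have h3 : MemLp (fun x : ℝ => x - m) 2 a := h2.sub (memLp_const m)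
  exact (memLp_two_iff_integrable_sq h3.aestronglyMeasurable).mp h3

lemma mVar_nonneg (a : Measure ℝ) : 0 ≤ mVar a :=
  integral_nonneg fun x => sq_nonneg _

lemma mStd_sq (a : Measure ℝ) : mStd a ^ 2 = mVar a :=
  Real.sq_sqrt (mVar_nonneg a)

lemma int_fst (a c : Measure ℝ) [IsProbabilityMeasure a] [IsProbabilityMeasure c]
    (f : ℝ → ℝ) : (∫ p : ℝ × ℝ, f p.1 ∂(a.prod c)) = ∫ x, f x ∂a := by
  have := integral_prod_mul (μ := a) (ν := c) f (fun _ => (1:ℝ))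
  simpa using this

lemma int_snd (a c : Measure ℝ) [IsProbabilityMeasure a] [IsProbabilityMeasure c]
    (f : ℝ → ℝ) : (∫ p : ℝ × ℝ, f p.2 ∂(a.prod c)) = ∫ x, f x ∂c := by
  have := integral_prod_mul (μ := a) (ν := c) (fun _ => (1:ℝ)) f
  simpa using this

lemma mVar_conv (a c : Measure ℝ) [IsProbabilityMeasure a] [IsProbabilityMeasure c]
    (ha : FinSecondMoment a) (hc : FinSecondMoment c) :
    mVar (mConv a c) = mVar a + mVar c := by
  have hadd : Measurable (fun p : ℝ × ℝ => p.1 + p.2) := measurable_fst.add measurable_snd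
  have hia := fin_int_id a ha
  have hic := fin_int_id c hc
  -- integrability of p.1 and p.2 on the product
  have hfst : Integrable (fun p : ℝ × ℝ => p.1) (a.prod c) := by
    have := hia.mul_prod (integrable_const (1 : ℝ)) (ν := c)
    simpa using this
  have hsnd : Integrable (fun p : ℝ × ℝ => p.2) (a.prod c) := by
    have := (integrable_const (1 : ℝ)).mul_prod hic (μ := a)
    simpa using this
  have hmean : mMean (mConv a c) = mMean a + mMean c := by
    rw [mMean, mConv,
      integral_map (f := fun z : ℝ => z) hadd.aemeasurable measurable_id.aestronglyMeasurable]
    calc ∫ p : ℝ × ℝ, p.1 + p.2 ∂(a.prod c)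
        = (∫ p : ℝ × ℝ, p.1 ∂(a.prod c)) + ∫ p : ℝ × ℝ, p.2 ∂(a.prod c) :=
          integral_add hfst hsnd
      _ = mMean a + mMean c := by
          rw [int_fst a c (fun x => x), int_snd a c (fun x => x)]; rfl
  set ma := mMean a
  set mc := mMean c
  have hu : Integrable (fun p : ℝ × ℝ => (p.1 - ma) ^ 2) (a.prod c) := by
    have := (fin_int_sub_sq a ha ma).mul_prod (integrable_const (1 : ℝ)) (ν := c)
    simpa using this
  have hv : Integrable (fun p : ℝ × ℝ => (p.2 - mc) ^ 2) (a.prod c) := by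
    have := (integrable_const (1 : ℝ)).mul_prod (fin_int_sub_sq c hc mc) (μ := a)
    simpa using this
  have huv : Integrable (fun p : ℝ × ℝ => (p.1 - ma) * (p.2 - mc)) (a.prod c) :=
    (hia.sub (integrable_const ma)).mul_prod (hic.sub (integrable_const mc))
  have hcross : (∫ p : ℝ × ℝ, (p.1 - ma) * (p.2 - mc) ∂(a.prod c)) = 0 := by
    rw [integral_prod_mul (fun x : ℝ => x - ma) (fun y : ℝ => y - mc)]
    have h1 : (∫ x : ℝ, x - ma ∂a) = 0 := by
      rw [integral_sub hia (integrable_const ma)]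
      simp [ma, mMean]
    rw [h1, zero_mul]
  have hmeas : AEStronglyMeasurable (fun z : ℝ => (z - (ma + mc)) ^ 2) (mConv a c) := by
    exact (measurable_id.sub_const _).pow_const 2 |>.aestronglyMeasurable
  rw [mVar, hmean, mConv, integral_map hadd.aemeasurable hmeas]
  have key : ∀ p : ℝ × ℝ, (p.1 + p.2 - (ma + mc)) ^ 2
      = (p.1 - ma) ^ 2 + ((p.2 - mc) ^ 2 + 2 * ((p.1 - ma) * (p.2 - mc))) := by
    intro p; ring
  calc (∫ p : ℝ × ℝ, (p.1 + p.2 - (ma + mc)) ^ 2 ∂(a.prod c))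
      = ∫ p : ℝ × ℝ, (p.1 - ma) ^ 2 + ((p.2 - mc) ^ 2 + 2 * ((p.1 - ma) * (p.2 - mc)))
          ∂(a.prod c) := by simp_rw [key]
    _ = (∫ p : ℝ × ℝ, (p.1 - ma) ^ 2 ∂(a.prod c))
        + ((∫ p : ℝ × ℝ, (p.2 - mc) ^ 2 ∂(a.prod c))
          + ∫ p : ℝ × ℝ, 2 * ((p.1 - ma) * (p.2 - mc)) ∂(a.prod c)) := by
        rw [integral_add (f := fun p : ℝ × ℝ => (p.1 - ma) ^ 2)
            (g := fun p : ℝ × ℝ => (p.2 - mc) ^ 2 + 2 * ((p.1 - ma) * (p.2 - mc)))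
            hu (hv.add (huv.const_mul 2)),
          integral_add (f := fun p : ℝ × ℝ => (p.2 - mc) ^ 2)
            (g := fun p : ℝ × ℝ => 2 * ((p.1 - ma) * (p.2 - mc))) hv (huv.const_mul 2)]
    _ = mVar a + mVar c := by
        rw [integral_const_mul, hcross,
          int_fst a c (fun x => (x - ma) ^ 2), int_snd a c (fun x => (x - mc) ^ 2)]
        simp [mVar, ma, mc]

/-- Proposition 1: if Δ(a)Δ(b) ≥ x and Δ(c)Δ(d) ≥ y then Δ(a⋆c)Δ(b⋆d) ≥ x + y. -/
theorem stmt0 (a b c d : Measure ℝ)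
    [IsProbabilityMeasure a] [IsProbabilityMeasure b]
    [IsProbabilityMeasure c] [IsProbabilityMeasure d]
    (ha : FinSecondMoment a) (hb : FinSecondMoment b)
    (hc : FinSecondMoment c) (hd : FinSecondMoment d)
    (x y : ℝ) (hx : 0 ≤ x) (hy : 0 ≤ y)
    (hab : mStd a * mStd b ≥ x) (hcd : mStd c * mStd d ≥ y) :
    mStd (mConv a c) * mStd (mConv b d) ≥ x + y := by
  set A := mStd a; set B := mStd b; set C := mStd c; set D := mStd d
  have hA : 0 ≤ A := Real.sqrt_nonneg _
  have hB : 0 ≤ B := Real.sqrt_nonneg _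
  have hC : 0 ≤ C := Real.sqrt_nonneg _
  have hD : 0 ≤ D := Real.sqrt_nonneg _
  have h1 : mStd (mConv a c) = Real.sqrt (A ^ 2 + C ^ 2) := by
    rw [mStd, mVar_conv a c ha hc, ← mStd_sq a, ← mStd_sq c]
  have h2 : mStd (mConv b d) = Real.sqrt (B ^ 2 + D ^ 2) := by
    rw [mStd, mVar_conv b d hb hd, ← mStd_sq b, ← mStd_sq d]
  rw [h1, h2, ← Real.sqrt_mul (by positivity)]
  have hle : x + y ≤ A * B + C * D := by linarith
  refine le_trans hle ((Real.le_sqrt (by positivity) (by positivity)).mpr ?_)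
  nlinarith [sq_nonneg (A * D - B * C)]
end

section
/- Position margin of a covariant phase-space observable: for Schwartz functions φ, ψ on ℝ and every q ∈ ℝ, ∫_ℝ P_{φ,ψ}(q,p) dp = ∫_ℝ |φ(x − q)|² |ψ(x)|² dx = (f ⋆ g)(q), where f(y) = |φ(−y)|², g(y) = |ψ(y)|², and ⋆ denotes convolution of functions with respect to Lebesgue measure. Thus the position margin of the phase-space distribution is the smearing of the position distribution |ψ|² by the measure with density |φ(−·)|². -/
open MeasureTheory
open scoped FourierTransform

/-- Phase-space density P_{φ,ψ}(q,p) = |∫ ψ(x) conj(φ(x−q)) e^{−2πipx} dx|². -/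
noncomputable def Pdens (φ ψ : ℝ → ℂ) (q p : ℝ) : ℝ :=
  ‖∫ x : ℝ, ψ x * (starRingEnd ℂ) (φ (x - q)) *
      Complex.exp (-(2 * Real.pi * p * x : ℝ) * Complex.I)‖ ^ 2

/-- Convolution of real functions on ℝ w.r.t. Lebesgue measure. -/
noncomputable def fConv (f g : ℝ → ℝ) : ℝ → ℝ := fun q => ∫ y, f (q - y) * g y

open Complex SchwartzMap
open scoped RealInnerProductSpace

private lemma transTG (q : ℝ) : Function.HasTemperateGrowth (fun x : ℝ => x - q) := by
  refine Function.HasTemperateGrowth.of_fderiv ?_ (by fun_prop) (k := 1) (C := 1 + |q|) ?_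
  · have : (fderiv ℝ fun x : ℝ => x - q) = fun _ => ContinuousLinearMap.id ℝ ℝ := by
      ext x
      simp [fderiv_sub_const]
    rw [this]
    exact .const _
  · intro x
    have h1 : ‖x - q‖ ≤ |x| + |q| := by
      simpa [Real.norm_eq_abs] using abs_sub x q
    have h2 : (0:ℝ) ≤ |q| := abs_nonneg q
    have h4 : ‖x‖ = |x| := rfl
    rw [h4]
    nlinarith [abs_nonneg x]

private lemma conjSchwartzTG (f : SchwartzMap ℝ ℂ) :
    Function.HasTemperateGrowth (fun x => (starRingEnd ℂ) (f x)) := by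
  constructor
  · exact Complex.conjLIE.contDiff.comp f.smooth'
  · intro n
    obtain ⟨C, -, hC⟩ := f.decay 0 n
    refine ⟨0, C, fun x => ?_⟩
    have h1 : (fun x => (starRingEnd ℂ) (f x)) = Complex.conjLIE ∘ (f : ℝ → ℂ) := rfl
    rw [h1, Complex.conjLIE.norm_iteratedFDeriv_comp_left (f : ℝ → ℂ) x n]
    simpa using hC x

private lemma integrable_conj_of {u : ℝ → ℂ} (hu : Integrable u) :
    Integrable (fun x => (starRingEnd ℂ) (u x)) :=
  (Complex.conjLIE.toLinearIsometry.toContinuousLinearMap).integrable_comp hu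

private lemma norm_sq_eq_mul_conj (z : ℂ) : ((‖z‖ ^ 2 : ℝ) : ℂ) = z * (starRingEnd ℂ) z := by
  rw [Complex.mul_conj]
  norm_cast
  rw [Complex.normSq_eq_norm_sq]

private lemma flip_innerL : (innerₗ ℝ).flip = innerₗ ℝ :=
  LinearMap.ext fun x => LinearMap.ext fun y => by
    simp [real_inner_comm]

/-- Plancherel's theorem for Schwartz functions on ℝ. -/
private lemma plancherel_schwartz (h : SchwartzMap ℝ ℂ) :
    ∫ p : ℝ, ‖𝓕 (⇑h) p‖ ^ 2 = ∫ x : ℝ, ‖h x‖ ^ 2 := by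
  set F : SchwartzMap ℝ ℂ := fourierTransformCLE ℂ (SchwartzMap ℝ ℂ) h with hF
  have hFeq : (F : ℝ → ℂ) = 𝓕 (⇑h) := rfl
  set g : ℝ → ℂ := fun p => (starRingEnd ℂ) (F p) with hgdef
  have hg_int : Integrable g := integrable_conj_of F.integrable
  -- 𝓕 g = conj ∘ h
  have hFg : 𝓕 g = fun x => (starRingEnd ℂ) (h x) := by
    ext x
    have hinv : 𝓕⁻ (𝓕 ⇑h) x = h x :=
      congrFun ((h.continuous).fourierInv_fourier_eq h.integrable F.integrable) x
    rw [Real.fourier_eq']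
    rw [← hinv, Real.fourierInv_eq', ← hFeq, ← integral_conj]
    congr 1
    ext p
    simp only [hgdef, smul_eq_mul, map_mul, ← Complex.exp_conj, Complex.conj_ofReal,
      Complex.conj_I, mul_neg]
    push_cast
    ring_nf
  -- multiplication formula
  have hmul : ∫ p, (𝓕 ⇑h p) * g p = ∫ x, (h x) * (𝓕 g x) := by
    have := VectorFourier.integral_fourierIntegral_smul_eq_flip (L := innerₗ ℝ)
      (μ := volume) (ν := volume) Real.continuous_fourierChar
      continuous_inner h.integrable hg_int
    rw [flip_innerL] at this
    simp only [smul_eq_mul] at this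
    exact this
  have key : ((∫ p : ℝ, ‖𝓕 (⇑h) p‖ ^ 2 : ℝ) : ℂ) = ((∫ x : ℝ, ‖h x‖ ^ 2 : ℝ) : ℂ) := by
    calc ((∫ p : ℝ, ‖𝓕 (⇑h) p‖ ^ 2 : ℝ) : ℂ)
        = ∫ p : ℝ, ((‖𝓕 (⇑h) p‖ ^ 2 : ℝ) : ℂ) := (integral_ofReal (𝕜 := ℂ)).symm
      _ = ∫ p, (𝓕 ⇑h p) * g p := by
          congr 1
          ext p
          rw [hgdef, ← hFeq, norm_sq_eq_mul_conj]
      _ = ∫ x, (h x) * (𝓕 g x) := hmul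
      _ = ∫ x : ℝ, ((‖h x‖ ^ 2 : ℝ) : ℂ) := by
          rw [hFg]
          congr 1
          ext x
          rw [norm_sq_eq_mul_conj]
      _ = ((∫ x : ℝ, ‖h x‖ ^ 2 : ℝ) : ℂ) := integral_ofReal (𝕜 := ℂ) (f := fun x : ℝ => ‖h x‖ ^ 2)
  exact_mod_cast key

/-- Position margin of the covariant phase-space observable: for Schwartz φ, ψ and
every q, ∫ P_{φ,ψ}(q,p) dp = ∫ |φ(x−q)|²|ψ(x)|² dx = (f ⋆ g)(q) with
f(y) = |φ(−y)|², g(y) = |ψ(y)|². -/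
theorem stmt6 (φ ψ : SchwartzMap ℝ ℂ) (q : ℝ) :
    (∫ p : ℝ, Pdens (fun x => φ x) (fun x => ψ x) q p) =
      ∫ x : ℝ, ‖φ (x - q)‖ ^ 2 * ‖ψ x‖ ^ 2 ∧
    (∫ p : ℝ, Pdens (fun x => φ x) (fun x => ψ x) q p) =
      fConv (fun y => ‖φ (-y)‖ ^ 2) (fun y => ‖ψ y‖ ^ 2) q := by
  -- the Schwartz function h x = ψ x * conj (φ (x - q))
  have hiso : Isometry (fun x : ℝ => x - q) :=
    Isometry.of_dist_eq fun a b => by simp [Real.dist_eq]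
  set φq : SchwartzMap ℝ ℂ :=
    SchwartzMap.compCLMOfAntilipschitz (𝕜 := ℝ) (transTG q) hiso.antilipschitz φ with hφq
  have hφqcoe : ∀ x, φq x = φ (x - q) := fun x => rfl
  have hgTG : Function.HasTemperateGrowth
      (fun x : ℝ => (starRingEnd ℂ) (φq x)) := conjSchwartzTG φq
  set h : SchwartzMap ℝ ℂ :=
    SchwartzMap.bilinLeftCLM (ContinuousLinearMap.mul ℝ ℂ) hgTG ψ with hh
  have hcoe : ∀ x, h x = ψ x * (starRingEnd ℂ) (φ (x - q)) := fun x => rfl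
  -- Pdens equals norm squared of Fourier transform of h
  have hP : ∀ p, Pdens (fun x => φ x) (fun x => ψ x) q p = ‖𝓕 (⇑h) p‖ ^ 2 := by
    intro p
    unfold Pdens
    congr 2
    rw [Real.fourier_eq']
    congr 1
    ext x
    rw [hcoe, smul_eq_mul]
    simp only [RCLike.inner_apply, starRingEnd_apply, star_trivial]
    push_cast
    ring_nf
  have main : (∫ p : ℝ, Pdens (fun x => φ x) (fun x => ψ x) q p)
      = ∫ x : ℝ, ‖φ (x - q)‖ ^ 2 * ‖ψ x‖ ^ 2 := by
    calc (∫ p : ℝ, Pdens (fun x => φ x) (fun x => ψ x) q p)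
        = ∫ p : ℝ, ‖𝓕 (⇑h) p‖ ^ 2 := by
          congr 1
          ext p
          exact hP p
      _ = ∫ x : ℝ, ‖h x‖ ^ 2 := plancherel_schwartz h
      _ = ∫ x : ℝ, ‖φ (x - q)‖ ^ 2 * ‖ψ x‖ ^ 2 := by
          congr 1
          ext x
          rw [hcoe]
          rw [norm_mul, mul_pow, RCLike.norm_conj]
          ring
  refine ⟨main, ?_⟩
  rw [main]
  unfold fConv
  congr 1
  ext y
  show _ = ‖φ (-(q - y))‖ ^ 2 * ‖ψ y‖ ^ 2
  rw [neg_sub]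
end

section
/- Momentum margin of a covariant phase-space observable: for Schwartz functions φ, ψ on ℝ and every p ∈ ℝ, ∫_ℝ P_{φ,ψ}(q,p) dq = ∫_ℝ |𝓕φ(ξ − p)|² |𝓕ψ(ξ)|² dξ = (F ⋆ G)(p), where F(η) = |𝓕φ(−η)|², G(η) = |𝓕ψ(η)|², and ⋆ denotes convolution of functions with respect to Lebesgue measure. Thus the momentum margin of the phase-space distribution is the smearing of the momentum distribution |𝓕ψ|² by the measure with density |𝓕φ(−·)|². -/
open MeasureTheory
open scoped FourierTransform Convolution

section aux

open Complex

/-- Plancherel for nice functions, via Fourier inversion and Fubini. -/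
lemma plancherel_aux {g : ℝ → ℂ} (hc : Continuous g) (hg : Integrable g)
    (hg' : Integrable (𝓕 g)) :
    ∫ x : ℝ, ‖g x‖ ^ 2 = ∫ ξ : ℝ, ‖𝓕 g ξ‖ ^ 2 := by
  have hFc : Continuous (𝓕 g) :=
    VectorFourier.fourierIntegral_continuous Real.continuous_fourierChar
      (by exact continuous_inner) hg
  have key : ∫ ξ : ℝ, 𝓕 g ξ * (starRingEnd ℂ) (𝓕 g ξ)
      = ∫ x : ℝ, g x * (starRingEnd ℂ) (g x) := by
    have hmeas : Continuous (fun z : ℝ × ℝ =>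
        (Complex.exp ((-2 * Real.pi * z.2 * z.1 : ℝ) * I) * g z.2) *
          (starRingEnd ℂ) (𝓕 g z.1)) := by
      refine Continuous.mul (Continuous.mul ?_ (hc.comp continuous_snd))
        (Complex.continuous_conj.comp (hFc.comp continuous_fst))
      exact Complex.continuous_exp.comp
        ((Complex.continuous_ofReal.comp (by fun_prop)).mul continuous_const)
    have hint : Integrable (fun z : ℝ × ℝ =>
        (Complex.exp ((-2 * Real.pi * z.2 * z.1 : ℝ) * I) * g z.2) *
          (starRingEnd ℂ) (𝓕 g z.1)) (volume.prod volume) := by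
      refine (hg'.norm.mul_prod hg.norm).mono' hmeas.aestronglyMeasurable ?_
      filter_upwards with z
      rw [norm_mul, norm_mul, RCLike.norm_conj,
        Complex.norm_exp_ofReal_mul_I, one_mul]
      exact le_of_eq (mul_comm _ _)
    calc ∫ ξ : ℝ, 𝓕 g ξ * (starRingEnd ℂ) (𝓕 g ξ)
        = ∫ ξ : ℝ, ∫ x : ℝ, (Complex.exp ((-2 * Real.pi * x * ξ : ℝ) * I) * g x)
            * (starRingEnd ℂ) (𝓕 g ξ) := by
          refine integral_congr_ae (Filter.Eventually.of_forall fun ξ => ?_)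
          beta_reduce
          rw [Real.fourier_real_eq_integral_exp_smul, ← integral_mul_const]
          refine integral_congr_ae (Filter.Eventually.of_forall fun x => ?_)
          beta_reduce
          rw [smul_eq_mul]
      _ = ∫ x : ℝ, ∫ ξ : ℝ, (Complex.exp ((-2 * Real.pi * x * ξ : ℝ) * I) * g x)
            * (starRingEnd ℂ) (𝓕 g ξ) := by
          exact integral_integral_swap hint
      _ = ∫ x : ℝ, g x * (starRingEnd ℂ) (g x) := by
          refine integral_congr_ae (Filter.Eventually.of_forall fun x => ?_)
          beta_reduce
          have inv : 𝓕⁻ (𝓕 g) x = g x := by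
            rw [hc.fourierInv_fourier_eq hg hg']
          have e1 : (∫ ξ : ℝ, (Complex.exp ((-2 * Real.pi * x * ξ : ℝ) * I) * g x)
              * (starRingEnd ℂ) (𝓕 g ξ))
              = g x * (starRingEnd ℂ) (∫ ξ : ℝ,
                  Complex.exp ((-2 * Real.pi * ξ * (-x) : ℝ) * I) * 𝓕 g ξ) := by
            rw [← integral_conj, ← integral_const_mul]
            refine integral_congr_ae (Filter.Eventually.of_forall fun ξ => ?_)
            beta_reduce
            rw [map_mul]
            have : (starRingEnd ℂ) (Complex.exp (((-2 * Real.pi * ξ * (-x) : ℝ) : ℂ) * I))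
                = Complex.exp (((-2 * Real.pi * x * ξ : ℝ) : ℂ) * I) := by
              rw [← Complex.exp_conj]
              congr 1
              simp only [map_mul, Complex.conj_ofReal, Complex.conj_I]
              push_cast
              ring
            rw [this]
            ring
          rw [e1]
          have e2 : (∫ ξ : ℝ, Complex.exp ((-2 * Real.pi * ξ * (-x) : ℝ) * I) * 𝓕 g ξ)
              = 𝓕 (𝓕 g) (-x) := by
            rw [Real.fourier_real_eq_integral_exp_smul]
            simp [smul_eq_mul]
          rw [e2, ← Real.fourierInv_eq_fourier_neg, inv]
  have cast_eq : ((∫ x : ℝ, ‖g x‖ ^ 2 : ℝ) : ℂ) = ((∫ ξ : ℝ, ‖𝓕 g ξ‖ ^ 2 : ℝ) : ℂ) := by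
    calc ((∫ x : ℝ, ‖g x‖ ^ 2 : ℝ) : ℂ)
        = ∫ x : ℝ, ((‖g x‖ ^ 2 : ℝ) : ℂ) := integral_ofReal.symm
      _ = ∫ x : ℝ, g x * (starRingEnd ℂ) (g x) := by
          refine integral_congr_ae (Filter.Eventually.of_forall fun x => ?_)
          beta_reduce
          rw [Complex.mul_conj']
          push_cast
          ring
      _ = ∫ ξ : ℝ, 𝓕 g ξ * (starRingEnd ℂ) (𝓕 g ξ) := key.symm
      _ = ∫ ξ : ℝ, ((‖𝓕 g ξ‖ ^ 2 : ℝ) : ℂ) := by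
          refine integral_congr_ae (Filter.Eventually.of_forall fun ξ => ?_)
          beta_reduce
          rw [Complex.mul_conj']
          push_cast
          ring
      _ = ((∫ ξ : ℝ, ‖𝓕 g ξ‖ ^ 2 : ℝ) : ℂ) := integral_ofReal (𝕜 := ℂ) (f := fun ξ => ‖𝓕 g ξ‖ ^ 2)
  exact_mod_cast cast_eq

/-- Convolution theorem for continuous integrable functions. -/
lemma fourier_conv_aux {f h : ℝ → ℂ} (hfc : Continuous f) (hhc : Continuous h)
    (hf : Integrable f) (hh : Integrable h) (ξ : ℝ) :
    𝓕 (fun q => ∫ x : ℝ, f x * h (q - x)) ξ = 𝓕 f ξ * 𝓕 h ξ := by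
  have base : Integrable (fun z : ℝ × ℝ =>
      (ContinuousLinearMap.mul ℂ ℂ) (f z.2) (h (z.1 - z.2))) (volume.prod volume) :=
    hf.convolution_integrand (ContinuousLinearMap.mul ℂ ℂ) hh
  have hmeas : Continuous (fun z : ℝ × ℝ =>
      Complex.exp ((-2 * Real.pi * z.1 * ξ : ℝ) * I) * (f z.2 * h (z.1 - z.2))) := by
    refine Continuous.mul ?_ ((hfc.comp continuous_snd).mul
      (hhc.comp (continuous_fst.sub continuous_snd)))
    exact Complex.continuous_exp.comp
      ((Complex.continuous_ofReal.comp (by fun_prop)).mul continuous_const)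
  have hint : Integrable (fun z : ℝ × ℝ =>
      Complex.exp ((-2 * Real.pi * z.1 * ξ : ℝ) * I) * (f z.2 * h (z.1 - z.2)))
      (volume.prod volume) := by
    refine base.norm.mono' hmeas.aestronglyMeasurable ?_
    filter_upwards with z
    have e : ((ContinuousLinearMap.mul ℂ ℂ) (f z.2)) (h (z.1 - z.2))
        = f z.2 * h (z.1 - z.2) := rfl
    rw [norm_mul, Complex.norm_exp_ofReal_mul_I, one_mul, e]
  calc 𝓕 (fun q => ∫ x : ℝ, f x * h (q - x)) ξ
      = ∫ q : ℝ, ∫ x : ℝ, Complex.exp ((-2 * Real.pi * q * ξ : ℝ) * I)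
          * (f x * h (q - x)) := by
        rw [Real.fourier_real_eq_integral_exp_smul]
        refine integral_congr_ae (Filter.Eventually.of_forall fun q => ?_)
        beta_reduce
        rw [smul_eq_mul, ← integral_const_mul]
    _ = ∫ x : ℝ, ∫ q : ℝ, Complex.exp ((-2 * Real.pi * q * ξ : ℝ) * I)
          * (f x * h (q - x)) := integral_integral_swap hint
    _ = ∫ x : ℝ, (Complex.exp ((-2 * Real.pi * x * ξ : ℝ) * I) * f x) * 𝓕 h ξ := by
        refine integral_congr_ae (Filter.Eventually.of_forall fun x => ?_)
        beta_reduce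
        have e0 : (∫ q : ℝ, Complex.exp ((-2 * Real.pi * q * ξ : ℝ) * I) * (f x * h (q - x)))
            = ∫ q : ℝ, Complex.exp ((-2 * Real.pi * (q + x) * ξ : ℝ) * I)
                * (f x * h ((q + x) - x)) :=
          (integral_add_right_eq_self
            (fun q => Complex.exp ((-2 * Real.pi * q * ξ : ℝ) * I) * (f x * h (q - x))) x).symm
        rw [e0]
        have e1 : 𝓕 h ξ = ∫ q : ℝ, Complex.exp ((-2 * Real.pi * q * ξ : ℝ) * I) * h q := by
          rw [Real.fourier_real_eq_integral_exp_smul]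
          simp [smul_eq_mul]
        rw [e1, ← integral_const_mul]
        refine integral_congr_ae (Filter.Eventually.of_forall fun q => ?_)
        beta_reduce
        have expadd : Complex.exp ((-2 * Real.pi * (q + x) * ξ : ℝ) * I)
            = Complex.exp ((-2 * Real.pi * x * ξ : ℝ) * I)
              * Complex.exp ((-2 * Real.pi * q * ξ : ℝ) * I) := by
          rw [← Complex.exp_add]
          congr 1
          push_cast
          ring
        rw [expadd]
        simp only [add_sub_cancel_right]
        ring
    _ = 𝓕 f ξ * 𝓕 h ξ := by
        rw [integral_mul_const]
        congr 1
        rw [Real.fourier_real_eq_integral_exp_smul]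
        simp [smul_eq_mul]

end aux

/-- Momentum margin of the covariant phase-space observable: for Schwartz φ, ψ and
every p, ∫ P_{φ,ψ}(q,p) dq = ∫ |𝓕φ(ξ−p)|²|𝓕ψ(ξ)|² dξ = (F ⋆ G)(p) with
F(η) = |𝓕φ(−η)|², G(η) = |𝓕ψ(η)|². -/
theorem stmt7 (φ ψ : SchwartzMap ℝ ℂ) (p : ℝ) :
    (∫ q : ℝ, Pdens (fun x => φ x) (fun x => ψ x) q p) =
      ∫ ξ : ℝ, ‖𝓕 (fun x => φ x) (ξ - p)‖ ^ 2 * ‖𝓕 (fun x => ψ x) ξ‖ ^ 2 ∧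
    (∫ q : ℝ, Pdens (fun x => φ x) (fun x => ψ x) q p) =
      fConv (fun η => ‖𝓕 (fun x => φ x) (-η)‖ ^ 2) (fun η => ‖𝓕 (fun x => ψ x) η‖ ^ 2) p := by
  classical
  set f : ℝ → ℂ :=
    fun x => ψ x * Complex.exp ((-(2 * Real.pi * p * x) : ℝ) * Complex.I) with hf_def
  set h : ℝ → ℂ := fun y => (starRingEnd ℂ) (φ (-y)) with hh_def
  have hfc : Continuous f := by
    refine Continuous.mul ψ.continuous ?_
    exact Complex.continuous_exp.comp
      ((Complex.continuous_ofReal.comp (by fun_prop)).mul continuous_const)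
  have hhc : Continuous h :=
    Complex.continuous_conj.comp (φ.continuous.comp continuous_neg)
  have hf_int : Integrable f := by
    refine ψ.integrable.norm.mono' hfc.aestronglyMeasurable ?_
    filter_upwards with x
    rw [hf_def]
    beta_reduce
    rw [norm_mul, Complex.norm_exp_ofReal_mul_I, mul_one]
  have hh_int : Integrable h := by
    refine (φ.integrable.comp_neg).norm.mono' hhc.aestronglyMeasurable ?_
    filter_upwards with x
    simp [hh_def, RCLike.norm_conj]
  -- the convolution
  set I : ℝ → ℂ := fun q => ∫ x : ℝ, f x * h (q - x) with hI_def
  have hIconv : I = (f ⋆[ContinuousLinearMap.mul ℂ ℂ, volume] h) := by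
    funext q
    rw [hI_def]
    beta_reduce
    rw [convolution_def]
    rfl
  have hI_int : Integrable I := by
    rw [hIconv]
    exact hf_int.integrable_convolution _ hh_int
  have hbdd : BddAbove (Set.range fun x => ‖h x‖) := by
    refine ⟨SchwartzMap.seminorm ℝ 0 0 φ, ?_⟩
    rintro r ⟨x, rfl⟩
    rw [hh_def]
    simpa [RCLike.norm_conj] using φ.norm_le_seminorm ℝ (-x)
  have hI_cont : Continuous I := by
    rw [hIconv]
    exact hbdd.continuous_convolution_right_of_integrable _ hf_int hhc
  -- Fourier transform computations
  have hFf : ∀ ξ : ℝ, 𝓕 f ξ = 𝓕 (fun x => ψ x) (ξ + p) := by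
    intro ξ
    rw [Real.fourier_real_eq_integral_exp_smul,
      Real.fourier_real_eq_integral_exp_smul]
    refine integral_congr_ae (Filter.Eventually.of_forall fun x => ?_)
    beta_reduce
    rw [smul_eq_mul, smul_eq_mul, hf_def]
    beta_reduce
    rw [show Complex.exp ((-2 * Real.pi * x * ξ : ℝ) * Complex.I)
        * (ψ x * Complex.exp ((-(2 * Real.pi * p * x) : ℝ) * Complex.I))
        = (Complex.exp ((-2 * Real.pi * x * ξ : ℝ) * Complex.I)
          * Complex.exp ((-(2 * Real.pi * p * x) : ℝ) * Complex.I)) * ψ x by ring]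
    rw [← Complex.exp_add]
    rw [show ((-2 * Real.pi * x * ξ : ℝ) : ℂ) * Complex.I
        + ((-(2 * Real.pi * p * x) : ℝ) : ℂ) * Complex.I
        = ((-2 * Real.pi * x * (ξ + p) : ℝ) : ℂ) * Complex.I by push_cast; ring]
  have hFh : ∀ ξ : ℝ, 𝓕 h ξ = (starRingEnd ℂ) (𝓕 (fun x => φ x) ξ) := by
    intro ξ
    rw [Real.fourier_real_eq_integral_exp_smul,
      Real.fourier_real_eq_integral_exp_smul, ← integral_conj]
    have e1 : (∫ y : ℝ, Complex.exp ((-2 * Real.pi * y * ξ : ℝ) * Complex.I) • h y)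
        = ∫ y : ℝ, (fun u : ℝ => (starRingEnd ℂ)
            (Complex.exp ((-2 * Real.pi * u * ξ : ℝ) * Complex.I) • φ u)) (-y) := by
      refine integral_congr_ae (Filter.Eventually.of_forall fun y => ?_)
      beta_reduce
      rw [smul_eq_mul, smul_eq_mul, map_mul, hh_def]
      beta_reduce
      congr 1
      rw [← Complex.exp_conj]
      congr 1
      simp only [map_mul, Complex.conj_ofReal, Complex.conj_I]
      push_cast
      ring
    rw [e1]
    exact integral_neg_eq_self (fun u : ℝ => (starRingEnd ℂ)
      (Complex.exp ((-2 * Real.pi * u * ξ : ℝ) * Complex.I) • φ u)) volume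
  have hFI : ∀ ξ : ℝ, 𝓕 I ξ = 𝓕 (fun x => ψ x) (ξ + p)
      * (starRingEnd ℂ) (𝓕 (fun x => φ x) ξ) := by
    intro ξ
    rw [hI_def]
    rw [fourier_conv_aux hfc hhc hf_int hh_int ξ, hFf ξ, hFh ξ]
  have hFψ_eq : 𝓕 (fun x => ψ x) = (SchwartzMap.fourierTransformCLM ℂ ψ : ℝ → ℂ) := rfl
  have hFφ_eq : 𝓕 (fun x => φ x) = (SchwartzMap.fourierTransformCLM ℂ φ : ℝ → ℂ) := rfl
  have hFI_int : Integrable (𝓕 I) := by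
    have hdom : Integrable (fun ξ : ℝ =>
        (SchwartzMap.seminorm ℝ 0 0 (SchwartzMap.fourierTransformCLM ℂ ψ))
          * ‖(SchwartzMap.fourierTransformCLM ℂ φ) ξ‖) :=
      ((SchwartzMap.fourierTransformCLM ℂ φ).integrable.norm.const_mul _)
    refine hdom.mono' ?_ ?_
    · apply Continuous.aestronglyMeasurable
      have hcont : Continuous (fun ξ : ℝ => 𝓕 (fun x => ψ x) (ξ + p)
          * (starRingEnd ℂ) (𝓕 (fun x => φ x) ξ)) := by
        rw [hFψ_eq, hFφ_eq]
        exact ((SchwartzMap.fourierTransformCLM ℂ ψ).continuous.comp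
          (continuous_id.add continuous_const)).mul
          (Complex.continuous_conj.comp (SchwartzMap.fourierTransformCLM ℂ φ).continuous)
      convert hcont using 1
      funext ξ
      exact hFI ξ
    · filter_upwards with ξ
      rw [hFI ξ, norm_mul, RCLike.norm_conj]
      refine mul_le_mul ?_ (le_of_eq (by rw [hFφ_eq])) (norm_nonneg _) (apply_nonneg _ _)
      rw [hFψ_eq]
      exact (SchwartzMap.fourierTransformCLM ℂ ψ).norm_le_seminorm ℝ _
  -- the core identity
  have main : (∫ q : ℝ, Pdens (fun x => φ x) (fun x => ψ x) q p)
      = ∫ ξ : ℝ, ‖𝓕 (fun x => φ x) (ξ - p)‖ ^ 2 * ‖𝓕 (fun x => ψ x) ξ‖ ^ 2 := by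
    have step1 : (∫ q : ℝ, Pdens (fun x => φ x) (fun x => ψ x) q p)
        = ∫ q : ℝ, ‖I q‖ ^ 2 := by
      refine integral_congr_ae (Filter.Eventually.of_forall fun q => ?_)
      beta_reduce
      unfold Pdens
      rw [hI_def]
      beta_reduce
      congr 2
      refine integral_congr_ae (Filter.Eventually.of_forall fun x => ?_)
      beta_reduce
      rw [hf_def, hh_def]
      beta_reduce
      rw [show -(q - x) = x - q by ring]
      push_cast
      ring_nf
    have step2 : (∫ q : ℝ, ‖I q‖ ^ 2) = ∫ ξ : ℝ, ‖𝓕 I ξ‖ ^ 2 :=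
      plancherel_aux hI_cont hI_int hFI_int
    have step3 : (∫ ξ : ℝ, ‖𝓕 I ξ‖ ^ 2)
        = ∫ ξ : ℝ, ‖𝓕 (fun x => φ x) (ξ - p)‖ ^ 2 * ‖𝓕 (fun x => ψ x) ξ‖ ^ 2 := by
      have e : (∫ ξ : ℝ, ‖𝓕 I ξ‖ ^ 2)
          = ∫ ξ : ℝ, (fun u : ℝ => ‖𝓕 (fun x => φ x) (u - p)‖ ^ 2
              * ‖𝓕 (fun x => ψ x) u‖ ^ 2) (ξ + p) := by
        refine integral_congr_ae (Filter.Eventually.of_forall fun ξ => ?_)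
        beta_reduce
        rw [hFI ξ, norm_mul, RCLike.norm_conj]
        simp only [add_sub_cancel_right]
        ring
      rw [e]
      exact integral_add_right_eq_self (fun u : ℝ => ‖𝓕 (fun x => φ x) (u - p)‖ ^ 2
        * ‖𝓕 (fun x => ψ x) u‖ ^ 2) p
    rw [step1, step2, step3]
  refine ⟨main, ?_⟩
  rw [main]
  unfold fConv
  refine integral_congr_ae (Filter.Eventually.of_forall fun y => ?_)
  beta_reduce
  rw [neg_sub]
end
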